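/- If (M,d) is a geodesic metric space satisfying the non-expansive projection property (NE), then (M,d) is uniquely geodesic: for any x, y ∈ M there is exactly one [0,1]-parametrized geodesic joining x to y. -/

import Mathlib

open Set Metric Filter

variable {M : Type*}

def IsGeodesic [MetricSpace M] (γ : ℝ → M) : Prop :=
  ∀ s ∈ Set.Icc (0:ℝ) 1, ∀ t ∈ Set.Icc (0:ℝ) 1,
    dist (γ s) (γ t) = |s - t| * dist (γ 0) (γ 1)

def GeodesicSpace (M : Type*) [MetricSpace M] : Prop :=
  ∀ x y : M, ∃ γ : ℝ → M, IsGeodesic γ ∧ γ 0 = x ∧ γ 1 = y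

def Perp [MetricSpace M] (γ η : ℝ → M) : Prop :=
  ∀ t ∈ Set.Icc (0:ℝ) 1, ∀ s ∈ Set.Icc (0:ℝ) 1,
    dist (γ 0) (γ t) ≤ dist (η s) (γ t)

def SO (M : Type*) [MetricSpace M] : Prop :=
  ∀ γ η : ℝ → M, IsGeodesic γ → IsGeodesic η → γ 0 = η 0 → Perp γ η → Perp η γ

def WeaklyConvex [MetricSpace M] (C : Set M) : Prop :=
  ∀ x ∈ C, ∀ y ∈ C, ∃ γ : ℝ → M, IsGeodesic γ ∧ γ 0 = x ∧ γ 1 = y ∧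
    ∀ t ∈ Set.Icc (0:ℝ) 1, γ t ∈ C

def GeoConvex [MetricSpace M] (C : Set M) : Prop :=
  ∀ γ : ℝ → M, IsGeodesic γ → γ 0 ∈ C → γ 1 ∈ C → ∀ t ∈ Set.Icc (0:ℝ) 1, γ t ∈ C

def NearestPt [MetricSpace M] (C : Set M) (x y : M) : Prop :=
  y ∈ C ∧ dist x y = Metric.infDist x C

def NE (M : Type*) [MetricSpace M] : Prop :=
  ∀ C : Set M, IsClosed C → WeaklyConvex C → ∀ x y xC yC : M,
    NearestPt C x xC → NearestPt C y yC → dist xC yC ≤ dist x y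

def BusemannConvex (M : Type*) [MetricSpace M] : Prop :=
  ∀ γ η : ℝ → M, IsGeodesic γ → IsGeodesic η →
    ConvexOn ℝ (Set.Icc (0:ℝ) 1) (fun t => dist (γ t) (η t))

section aux
variable [MetricSpace M]

lemma geo_continuousOn {γ : ℝ → M} (h : IsGeodesic γ) :
    ContinuousOn γ (Icc 0 1) := by
  have : LipschitzOnWith (Real.toNNReal (dist (γ 0) (γ 1))) γ (Icc 0 1) := by
    apply LipschitzOnWith.of_dist_le_mul
    intro s hs t ht
    rw [h s hs t ht, Real.coe_toNNReal _ dist_nonneg, Real.dist_eq, mul_comm]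
  exact this.continuousOn

lemma geo_img_compact {γ : ℝ → M} (h : IsGeodesic γ) :
    IsCompact (γ '' Icc 0 1) :=
  isCompact_Icc.image_of_continuousOn (geo_continuousOn h)

lemma aff_mem {a b u : ℝ} (ha : a ∈ Icc (0:ℝ) 1) (hb : b ∈ Icc (0:ℝ) 1)
    (hu : u ∈ Icc (0:ℝ) 1) : a + u * (b - a) ∈ Icc (0:ℝ) 1 := by
  obtain ⟨ha0, ha1⟩ := ha; obtain ⟨hb0, hb1⟩ := hb; obtain ⟨hu0, hu1⟩ := hu
  constructor <;> nlinarith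

lemma geo_img_weaklyConvex {γ : ℝ → M} (h : IsGeodesic γ) :
    WeaklyConvex (γ '' Icc 0 1) := by
  rintro _ ⟨a, ha, rfl⟩ _ ⟨b, hb, rfl⟩
  refine ⟨fun u => γ (a + u * (b - a)), ?_, ?_, ?_, ?_⟩
  · intro u hu v hv
    dsimp only
    rw [h _ (aff_mem ha hb hu) _ (aff_mem ha hb hv),
        h _ (aff_mem ha hb (by norm_num : (0:ℝ) ∈ Icc (0:ℝ) 1))
          _ (aff_mem ha hb (by norm_num : (1:ℝ) ∈ Icc (0:ℝ) 1)),
        show a + (0:ℝ)*(b-a) - (a + 1*(b-a)) = -(b-a) by ring,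
        show a + u*(b-a) - (a + v*(b-a)) = (u-v)*(b-a) by ring,
        abs_mul, abs_neg]
    ring
  · dsimp only; rw [show a + (0:ℝ)*(b-a) = a by ring]
  · dsimp only; rw [show a + (1:ℝ)*(b-a) = b by ring]
  · intro u hu; exact ⟨_, aff_mem ha hb hu, rfl⟩

lemma nearest_self {C : Set M} {z : M} (hz : z ∈ C) : NearestPt C z z :=
  ⟨hz, by rw [dist_self, infDist_zero_of_mem hz]⟩

lemma abs_zero_sub {t : ℝ} (ht : t ∈ Icc (0:ℝ) 1) : |(0:ℝ) - t| = t := by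
  rw [abs_sub_comm, sub_zero, abs_of_nonneg ht.1]

lemma abs_one_sub {t : ℝ} (ht : t ∈ Icc (0:ℝ) 1) : |(1:ℝ) - t| = 1 - t :=
  abs_of_nonneg (by linarith [ht.2])

/-- Any nearest point of `η t` on the image of `γ` is `γ t`, when `γ, η` are geodesics
with the same (distinct) endpoints. -/
lemma proj_point (hNE : NE M) {γ η : ℝ → M}
    (hγ : IsGeodesic γ) (hη : IsGeodesic η)
    (h0 : η 0 = γ 0) (h1 : η 1 = γ 1)
    {t : ℝ} (ht : t ∈ Icc (0:ℝ) 1)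
    (hd : dist (γ 0) (γ 1) ≠ 0)
    {p : M} (hp : NearestPt (γ '' Icc 0 1) (η t) p) : p = γ t := by
  have h00 : (0:ℝ) ∈ Icc (0:ℝ) 1 := by norm_num
  have h11 : (1:ℝ) ∈ Icc (0:ℝ) 1 := by norm_num
  have hcl := (geo_img_compact hγ).isClosed
  have hwc := geo_img_weaklyConvex hγ
  have hxC : γ 0 ∈ γ '' Icc 0 1 := ⟨0, h00, rfl⟩
  have hyC : γ 1 ∈ γ '' Icc 0 1 := ⟨1, h11, rfl⟩
  have hl1 := hNE _ hcl hwc (γ 0) (η t) (γ 0) p (nearest_self hxC) hp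
  have hl2 := hNE _ hcl hwc (γ 1) (η t) (γ 1) p (nearest_self hyC) hp
  obtain ⟨u, hu, rfl⟩ := hp.1
  have hD : dist (η 0) (η 1) = dist (γ 0) (γ 1) := by rw [h0, h1]
  have e1 : dist (γ 0) (η t) = t * dist (γ 0) (γ 1) := by
    rw [← h0, hη 0 h00 t ht, hD, abs_zero_sub ht, h0]
  have e2 : dist (γ 1) (η t) = (1 - t) * dist (γ 0) (γ 1) := by
    rw [← h1, hη 1 h11 t ht, hD, abs_one_sub ht, h1]
  have e3 : dist (γ 0) (γ u) = u * dist (γ 0) (γ 1) := by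
    rw [hγ 0 h00 u hu, abs_zero_sub hu]
  have e4 : dist (γ 1) (γ u) = (1 - u) * dist (γ 0) (γ 1) := by
    rw [hγ 1 h11 u hu, abs_one_sub hu]
  rw [e1, e3] at hl1
  rw [e2, e4] at hl2
  have hDpos : 0 < dist (γ 0) (γ 1) := lt_of_le_of_ne dist_nonneg (Ne.symm hd)
  have : u = t := by nlinarith
  rw [this]

end aux

theorem stmt4 [MetricSpace M] (hgeo : GeodesicSpace M) (hNE : NE M) :
    ∀ x y : M,
      (∃ γ : ℝ → M, IsGeodesic γ ∧ γ 0 = x ∧ γ 1 = y) ∧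
      (∀ γ η : ℝ → M, IsGeodesic γ → IsGeodesic η →
        γ 0 = x → γ 1 = y → η 0 = x → η 1 = y →
        ∀ t ∈ Set.Icc (0:ℝ) 1, γ t = η t) := by
  intro x y
  refine ⟨hgeo x y, ?_⟩
  intro γ η hγ hη hγ0 hγ1 hη0 hη1 t ht
  have h00 : (0:ℝ) ∈ Icc (0:ℝ) 1 := by norm_num
  have h11 : (1:ℝ) ∈ Icc (0:ℝ) 1 := by norm_num
  by_cases hd : dist (γ 0) (γ 1) = 0
  · have e1 : γ t = γ 0 := by
      have := hγ t ht 0 h00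
      rw [hd, mul_zero] at this
      exact dist_eq_zero.mp this
    have e2 : η t = γ 0 := by
      have := hη t ht 0 h00
      rw [hη0, hη1, ← hγ0, ← hγ1, hd, mul_zero] at this
      exact dist_eq_zero.mp this
    rw [e1, e2]
  · -- main case : distinct endpoints
    have hCne : (γ '' Icc 0 1).Nonempty := ⟨γ 0, 0, h00, rfl⟩
    have hclC := (geo_img_compact hγ).isClosed
    have hwcC := geo_img_weaklyConvex hγ
    have hz1C : γ t ∈ γ '' Icc 0 1 := ⟨t, ht, rfl⟩
    have hηend0 : η 0 = γ 0 := hη0.trans hγ0.symm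
    have hηend1 : η 1 = γ 1 := hη1.trans hγ1.symm
    -- the nearest point of η t on im γ is γ t
    obtain ⟨p, hpC, hpd⟩ := (geo_img_compact hγ).exists_infDist_eq_dist hCne (η t)
    have hpt : p = γ t :=
      proj_point hNE hγ hη hηend0 hηend1 ht hd ⟨hpC, hpd.symm⟩
    subst hpt
    -- hpd : infDist (η t) (γ '' Icc 0 1) = dist (η t) (γ t)
    obtain ⟨σ, hσ, hσ0, hσ1⟩ := hgeo (γ t) (η t)
    have hδσ : dist (σ 0) (σ 1) = dist (γ t) (η t) := by rw [hσ0, hσ1]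
    -- every point of σ is at least dist (γ 0) (γ t) from γ 0
    have key : ∀ s ∈ Icc (0:ℝ) 1, dist (γ 0) (γ t) ≤ dist (γ 0) (σ s) := by
      intro s hs
      obtain ⟨q, hqC, hqd⟩ := (geo_img_compact hγ).exists_infDist_eq_dist hCne (σ s)
      have h1 : dist (σ s) (γ t) = s * dist (γ t) (η t) := by
        rw [← hσ0, hσ s hs 0 h00, hδσ, abs_sub_comm, abs_zero_sub hs, hσ0]
      have h2 : dist (η t) (σ s) = (1 - s) * dist (γ t) (η t) := by
        rw [← hσ1, hσ 1 h11 s hs, hδσ, abs_one_sub hs, hσ1]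
      have hq1 : dist (σ s) q ≤ s * dist (γ t) (η t) := by
        rw [← hqd, ← h1]
        exact infDist_le_dist_of_mem hz1C
      have hq2 : dist (η t) q ≤ dist (η t) (γ t) := by
        calc dist (η t) q ≤ dist (η t) (σ s) + dist (σ s) q := dist_triangle _ _ _
          _ ≤ (1 - s) * dist (γ t) (η t) + s * dist (γ t) (η t) := by
              rw [h2]; exact add_le_add (le_refl _) hq1
          _ = dist (γ t) (η t) := by ring
          _ = dist (η t) (γ t) := dist_comm _ _
      have hnpq : NearestPt (γ '' Icc 0 1) (η t) q :=
        ⟨hqC, le_antisymm (by rw [hpd]; exact hq2) (infDist_le_dist_of_mem hqC)⟩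
      have huniq := hNE _ hclC hwcC (η t) (η t) (γ t) q ⟨hz1C, hpd.symm⟩ hnpq
      rw [dist_self] at huniq
      have hq : q = γ t :=
        (dist_eq_zero.mp (le_antisymm huniq dist_nonneg)).symm
      have hnpσ : NearestPt (γ '' Icc 0 1) (σ s) (γ t) :=
        ⟨hz1C, by rw [← hq]; exact hqd.symm⟩
      have hxC : γ 0 ∈ γ '' Icc 0 1 := ⟨0, h00, rfl⟩
      exact hNE _ hclC hwcC (γ 0) (σ s) (γ 0) (γ t) (nearest_self hxC) hnpσ
    -- now both γ t and η t are nearest points of x = γ 0 on the image of σ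
    have hclS := (geo_img_compact hσ).isClosed
    have hwcS := geo_img_weaklyConvex hσ
    have hSne : (σ '' Icc 0 1).Nonempty := ⟨σ 0, 0, h00, rfl⟩
    have hz1S : γ t ∈ σ '' Icc 0 1 := ⟨0, h00, hσ0⟩
    have hz2S : η t ∈ σ '' Icc 0 1 := ⟨1, h11, hσ1⟩
    have hxz1 : dist (γ 0) (γ t) = t * dist (γ 0) (γ 1) := by
      rw [hγ 0 h00 t ht, abs_zero_sub ht]
    have hxz2 : dist (γ 0) (η t) = t * dist (γ 0) (γ 1) := by
      rw [← hηend0, hη 0 h00 t ht, hηend0, hηend1, abs_zero_sub ht]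
    have hinf : infDist (γ 0) (σ '' Icc 0 1) = dist (γ 0) (γ t) := by
      obtain ⟨r, hrS, hrd⟩ := (geo_img_compact hσ).exists_infDist_eq_dist hSne (γ 0)
      obtain ⟨s, hs, rfl⟩ := hrS
      exact le_antisymm (infDist_le_dist_of_mem hz1S) (by rw [hrd]; exact key s hs)
    have np1 : NearestPt (σ '' Icc 0 1) (γ 0) (γ t) := ⟨hz1S, hinf.symm⟩
    have np2 : NearestPt (σ '' Icc 0 1) (γ 0) (η t) :=
      ⟨hz2S, by rw [hinf, hxz1, hxz2]⟩
    have hfin := hNE _ hclS hwcS (γ 0) (γ 0) (γ t) (η t) np1 np2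
    rw [dist_self] at hfin
    exact dist_eq_zero.mp (le_antisymm hfin dist_nonneg)
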